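/- arXiv:1301.4359 — 3 statements merged into one kernel-verified Lean document; each statement's English description precedes it below -/
import Mathlib

section
/- For every integer p ≥ 3 and all real f₁, f₂, the series ∑_{n=0}^∞ ((1/2)_n / n!)^2 · (n + f₁)(n + f₂)/((n+1)(n+2)···(n+p)) equals (Γ(p)/Γ(p + 1/2)^2) · (f₁ f₂ + (f₁ + f₂ + 1)/(4(p−1)) + 9/(16(p−1)(p−2))). -/
open Real BigOperators

noncomputable def poch (a : ℝ) (n : ℕ) : ℝ := ∏ i ∈ Finset.range n, (a + i)

noncomputable def digamma (x : ℝ) : ℝ := deriv Real.Gamma x / Real.Gamma x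

open Filter Finset Topology

namespace S13


lemma poch_succ (a : ℝ) (n : ℕ) : poch a (n+1) = poch a n * (a + n) :=
  Finset.prod_range_succ _ _

lemma poch_zero (a : ℝ) : poch a 0 = 1 := rfl

lemma poch_succ' (a : ℝ) (n : ℕ) : poch a (n+1) = a * poch (a+1) n := by
  unfold poch
  rw [Finset.prod_range_succ']
  push_cast
  rw [add_zero, mul_comm]
  congr 1
  exact Finset.prod_congr rfl fun i _ => by ring

lemma poch_shift (x : ℝ) (q : ℕ) : x * poch (x+1) q = poch x q * (x + q) := by
  rw [← poch_succ', poch_succ]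

lemma poch_pos {a : ℝ} (ha : 0 < a) (n : ℕ) : 0 < poch a n :=
  Finset.prod_pos fun i _ => by positivity

lemma pow_le_poch {x : ℝ} (hx : 1 ≤ x) (q : ℕ) : x ^ q ≤ poch x q := by
  induction q with
  | zero => simp [poch_zero]
  | succ q ih =>
      rw [poch_succ, pow_succ]
      have h1 : x ≤ x + q := le_add_of_nonneg_right (Nat.cast_nonneg q)
      have h2 : (0:ℝ) < poch x q := poch_pos (by linarith) q
      nlinarith [pow_nonneg (by linarith : (0:ℝ) ≤ x) q]
      
noncomputable def A (n : ℕ) : ℝ := (poch (1/2) n / n.factorial)^2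

lemma A_nonneg (n : ℕ) : 0 ≤ A n := by unfold A; positivity

lemma A_zero : A 0 = 1 := by unfold A; simp [poch_zero]

lemma A_succ (n : ℕ) : A (n+1) * ((n:ℝ)+1)^2 = A n * ((n:ℝ)+1/2)^2 := by
  have h : (n.factorial : ℝ) ≠ 0 := Nat.cast_ne_zero.2 n.factorial_ne_zero
  unfold A
  rw [poch_succ, Nat.factorial_succ]
  push_cast
  field_simp
  ring


lemma A_le (n : ℕ) : A n * (2*(n:ℝ)+1) ≤ 1 := by
  induction n with
  | zero => simp [A_zero]
  | succ n ih =>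
      have h := A_succ n
      have h0 := A_nonneg n
      have h1 := A_nonneg (n+1)
      push_cast
      nlinarith [sq_nonneg ((n:ℝ)+1), (Nat.cast_nonneg n : (0:ℝ) ≤ (n:ℝ))]

/-- Wallis partial product -/
noncomputable def W (k : ℕ) : ℝ :=
  ∏ i ∈ range k, ((2 : ℝ) * i + 2) / (2 * i + 1) * ((2 * i + 2) / (2 * i + 3))

lemma W_pos (k : ℕ) : 0 < W k := Finset.prod_pos fun i _ => by positivity

lemma A_W (n : ℕ) : (A n * (2*(n:ℝ)+1)) * W n = 1 := by
  induction n with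
  | zero => norm_num [A_zero, W, poch_zero]
  | succ n ih =>
      have h := A_succ n
      have hp : ((n:ℝ)+1) ≠ 0 := by positivity
      have h2 : A (n+1) = A n * ((n:ℝ)+1/2)^2 / ((n:ℝ)+1)^2 := by
        field_simp at h ⊢; linarith
      unfold W
      rw [Finset.prod_range_succ]
      unfold W at ih
      push_cast
      rw [h2]
      have h3 : (2*(n:ℝ)+1) ≠ 0 := by positivity
      have h4 : (2*(n:ℝ)+3) ≠ 0 := by positivity
      field_simp
      field_simp at ih
      linear_combination (2*(n:ℝ)+3) * ih

lemma tendsto_A_mul : Tendsto (fun n : ℕ => A n * (2*(n:ℝ)+1)) atTop (𝓝 (2/π)) := by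
  have hW : Tendsto W atTop (𝓝 (π/2)) := Real.tendsto_prod_pi_div_two
  have h2 : Tendsto (fun n => (W n)⁻¹) atTop (𝓝 ((π/2)⁻¹)) :=
    hW.inv₀ (by positivity)
  have he : (fun n : ℕ => A n * (2*(n:ℝ)+1)) = fun n => (W n)⁻¹ := by
    funext n
    have h := A_W n
    field_simp [(W_pos n).ne']
    linear_combination h
  rw [he]
  convert h2 using 2
  rw [inv_div]

lemma tendsto_inv21 : Tendsto (fun n : ℕ => 1/(2*(n:ℝ)+1)) atTop (𝓝 0) := by
  apply squeeze_zero (fun n => by positivity) (g := fun n : ℕ => 1/((n:ℝ)+1))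
  · intro n
    apply div_le_div₀ (by norm_num) le_rfl (by positivity)
    push_cast; linarith [(Nat.cast_nonneg n : (0:ℝ) ≤ (n:ℝ))]
  · exact tendsto_one_div_add_atTop_nhds_zero_nat

lemma tendsto_nA : Tendsto (fun n : ℕ => (n:ℝ) * A n) atTop (𝓝 (1/π)) := by
  have hfrac : Tendsto (fun n : ℕ => (n:ℝ)/(2*(n:ℝ)+1)) atTop (𝓝 (1/2)) := by
    have he : (fun n : ℕ => (n:ℝ)/(2*(n:ℝ)+1))
        = fun n : ℕ => 1/2 - (1/2) * (1/(2*(n:ℝ)+1)) := by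
      funext n
      have : (2*(n:ℝ)+1) ≠ 0 := by positivity
      field_simp
      ring
    rw [he]
    have := (tendsto_inv21.const_mul (1/2 : ℝ)).const_sub (1/2 : ℝ)
    simpa using this
  have := tendsto_A_mul.mul hfrac
  have heq : (fun n : ℕ => (A n * (2*(n:ℝ)+1)) * ((n:ℝ)/(2*(n:ℝ)+1)))
      = fun n : ℕ => (n:ℝ) * A n := by
    funext n
    have h : (2*(n:ℝ)+1) ≠ 0 := by positivity
    field_simp
  rw [heq] at this
  convert this using 2
  ring

noncomputable def c (q n : ℕ) : ℝ := A n / poch ((n:ℝ)+1) q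

lemma pochn_pos (n q : ℕ) : 0 < poch ((n:ℝ)+1) q := poch_pos (by positivity) q

lemma c_nonneg (q n : ℕ) : 0 ≤ c q n := div_nonneg (A_nonneg n) (pochn_pos n q).le

lemma c_zero (n : ℕ) : c 0 n = A n := by rw [c, poch_zero, div_one]

lemma c_rel1 (q n : ℕ) : c q n = c (q+1) n * ((n:ℝ)+1+q) := by
  rw [c, c, poch_succ]
  have h1 := (pochn_pos n q).ne'
  have h2 : ((n:ℝ)+1+q) ≠ 0 := by positivity
  field_simp

lemma c_rel2 (q n : ℕ) :
    c q (n+1) * (((n:ℝ)+1) * ((n:ℝ)+1+q)) = c q n * ((n:ℝ)+1/2)^2 := by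
  rw [c, c]
  have hs := poch_shift ((n:ℝ)+1) q
  have hA := A_succ n
  have h1 := (pochn_pos n q).ne'
  have h2 := (pochn_pos (n+1) q).ne'
  have h3 : ((n:ℝ)+1) ≠ 0 := by positivity
  push_cast at h2 ⊢
  field_simp
  linear_combination (-4*A (n+1)*((n:ℝ)+1)) * hs + (4*poch ((n:ℝ)+1+1) q) * hA

lemma c_rel3 (q n : ℕ) :
    ((n:ℝ)+1) * c q (n+1) = c (q+1) n * ((n:ℝ)+1/2)^2 := by
  have h2 : ((n:ℝ)+1+q) ≠ 0 := by positivity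
  apply mul_right_cancel₀ h2
  linear_combination c_rel2 q n + ((n:ℝ)+1/2)^2 * c_rel1 q n

lemma tele {e d : ℕ → ℝ} {L : ℝ} (hd : ∀ n, d n = e n - e (n+1)) (hS : Summable d)
    (hL : Tendsto e atTop (𝓝 L)) : ∑' n, d n = e 0 - L := by
  apply HasSum.tsum_eq
  rw [hasSum_iff_tendsto_nat_of_summable_norm (by simpa using hS.abs)]
  have hps : ∀ n, ∑ i ∈ range n, d i = e 0 - e n := by
    intro n
    simp only [hd]
    exact Finset.sum_range_sub' e n
  simp only [hps]
  exact tendsto_const_nhds.sub hL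

lemma summable_inv_sq : Summable (fun n : ℕ => 1/((n:ℝ)+1)^2) := by
  have h : Summable (fun n : ℕ => 1/(n:ℝ)^2) := by
    exact_mod_cast summable_one_div_nat_pow.mpr (le_refl 2)
  have h2 := (summable_nat_add_iff 1).mpr h
  simpa using h2

lemma A_le' (n : ℕ) : A n * ((n:ℝ)+1) ≤ 1 := by
  nlinarith [A_le n, A_nonneg n, (Nat.cast_nonneg n : (0:ℝ) ≤ (n:ℝ))]

lemma master {k q : ℕ} (h : k + 1 ≤ q) : Summable (fun n : ℕ => ((n:ℝ)+1)^k * c q n) := by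
  apply Summable.of_nonneg_of_le (fun (n : ℕ) => mul_nonneg (by positivity) (c_nonneg q n)) _
    summable_inv_sq
  intro n
  have hP := pochn_pos n q
  have hx : (1:ℝ) ≤ (n:ℝ)+1 := by linarith [(Nat.cast_nonneg n : (0:ℝ) ≤ (n:ℝ))]
  have step : ((n:ℝ)+1)^k * A n * ((n:ℝ)+1)^2 ≤ poch ((n:ℝ)+1) q := by
    calc ((n:ℝ)+1)^k * A n * ((n:ℝ)+1)^2
        = ((n:ℝ)+1)^(k+1) * (A n * ((n:ℝ)+1)) := by rw [pow_succ]; ring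
      _ ≤ ((n:ℝ)+1)^(k+1) * 1 := by
          apply mul_le_mul_of_nonneg_left (A_le' n) (by positivity)
      _ ≤ ((n:ℝ)+1)^q := by rw [mul_one]; exact pow_le_pow_right₀ hx h
      _ ≤ poch ((n:ℝ)+1) q := pow_le_poch hx q
  rw [c, mul_div_assoc', div_le_div_iff₀ hP (by positivity)]
  nlinarith [step]

lemma summable_c {q : ℕ} (h : 1 ≤ q) : Summable (c q) := by
  have := master (k := 0) (q := q) h
  simpa using this

lemma summable_nc {q : ℕ} (h : 2 ≤ q) : Summable (fun n : ℕ => (n:ℝ) * c q n) := by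
  apply Summable.of_nonneg_of_le (fun (n : ℕ) => mul_nonneg (Nat.cast_nonneg n) (c_nonneg q n))
    _ (master (k := 1) (q := q) h)
  intro n
  apply mul_le_mul_of_nonneg_right _ (c_nonneg q n)
  simp

lemma summable_n2c {q : ℕ} (h : 3 ≤ q) : Summable (fun n : ℕ => (n:ℝ)^2 * c q n) := by
  apply Summable.of_nonneg_of_le (fun (n : ℕ) => mul_nonneg (by positivity) (c_nonneg q n))
    _ (master (k := 2) (q := q) h)
  intro n
  apply mul_le_mul_of_nonneg_right _ (c_nonneg q n)
  nlinarith [(Nat.cast_nonneg n : (0:ℝ) ≤ (n:ℝ))]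

lemma tendsto_nc {q : ℕ} (h : 1 ≤ q) :
    Tendsto (fun n : ℕ => (n:ℝ) * c q n) atTop (𝓝 0) := by
  apply squeeze_zero (fun (n : ℕ) => mul_nonneg (Nat.cast_nonneg n) (c_nonneg q n))
    (g := fun n : ℕ => 1/((n:ℝ)+1))
  · intro n
    have hP := pochn_pos n q
    have hx : (1:ℝ) ≤ (n:ℝ)+1 := by linarith [(Nat.cast_nonneg n : (0:ℝ) ≤ (n:ℝ))]
    have hnum : (n:ℝ) * A n ≤ 1 := by
      nlinarith [A_le n, A_nonneg n, (Nat.cast_nonneg n : (0:ℝ) ≤ (n:ℝ))]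
    have hden : ((n:ℝ)+1) ≤ poch ((n:ℝ)+1) q := by
      calc ((n:ℝ)+1) = ((n:ℝ)+1)^1 := (pow_one _).symm
        _ ≤ ((n:ℝ)+1)^q := pow_le_pow_right₀ hx h
        _ ≤ poch ((n:ℝ)+1) q := pow_le_poch hx q
    rw [c, mul_div_assoc']
    exact div_le_div₀ (by norm_num) hnum (by positivity) hden
  · exact tendsto_one_div_add_atTop_nhds_zero_nat

lemma tendsto_n2c {q : ℕ} (h : 2 ≤ q) :
    Tendsto (fun n : ℕ => (n:ℝ)^2 * c q n) atTop (𝓝 0) := by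
  apply squeeze_zero (fun (n : ℕ) => mul_nonneg (by positivity) (c_nonneg q n))
    (g := fun n : ℕ => 1/((n:ℝ)+1))
  · intro n
    have hP := pochn_pos n q
    have hx : (1:ℝ) ≤ (n:ℝ)+1 := by linarith [(Nat.cast_nonneg n : (0:ℝ) ≤ (n:ℝ))]
    have hnum : (n:ℝ)^2 * A n ≤ (n:ℝ)+1 := by
      nlinarith [A_le n, A_nonneg n, (Nat.cast_nonneg n : (0:ℝ) ≤ (n:ℝ))]
    have hden : ((n:ℝ)+1)^2 ≤ poch ((n:ℝ)+1) q := by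
      calc ((n:ℝ)+1)^2 ≤ ((n:ℝ)+1)^q := pow_le_pow_right₀ hx h
        _ ≤ poch ((n:ℝ)+1) q := pow_le_poch hx q
    rw [c, mul_div_assoc', div_le_div_iff₀ hP (by positivity)]
    nlinarith [hnum, hden, (Nat.cast_nonneg n : (0:ℝ) ≤ (n:ℝ)), A_nonneg n]
  · exact tendsto_one_div_add_atTop_nhds_zero_nat

lemma base : ∑' n, c 1 n = 4/π := by
  have hd : ∀ n : ℕ, (-(1/4)) * c 1 n
      = (fun n : ℕ => (n:ℝ) * c 0 n) n - (fun n : ℕ => (n:ℝ) * c 0 n) (n+1) := by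
    intro n
    have h1 := c_rel1 0 n
    have h3 := c_rel3 0 n
    push_cast at h1 h3 ⊢
    linear_combination h3 - (n:ℝ) * h1
  have hS : Summable (fun n : ℕ => (-(1/4 : ℝ)) * c 1 n) := (summable_c le_rfl).mul_left _
  have hL : Tendsto (fun n : ℕ => (n:ℝ) * c 0 n) atTop (𝓝 (1/π)) := by
    have he : (fun n : ℕ => (n:ℝ) * c 0 n) = fun n : ℕ => (n:ℝ) * A n := by
      funext n; rw [c_zero]
    rw [he]; exact tendsto_nA
  have key := tele hd hS hL
  simp only [Nat.cast_zero, zero_mul, zero_sub] at key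
  rw [tsum_mul_left] at key
  have hpi : (π:ℝ) ≠ 0 := Real.pi_ne_zero
  field_simp at key ⊢
  linarith [key]

lemma T1 {q : ℕ} (hq : 1 ≤ q) :
    (q:ℝ) * ∑' n : ℕ, (n:ℝ) * c (q+1) n = (1/4) * ∑' n, c (q+1) n := by
  have hd : ∀ n : ℕ, ((q:ℝ) * n - 1/4) * c (q+1) n
      = (fun n : ℕ => (n:ℝ) * c q n) n - (fun n : ℕ => (n:ℝ) * c q n) (n+1) := by
    intro n
    have h1 := c_rel1 q n
    have h3 := c_rel3 q n
    push_cast at h1 h3 ⊢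
    linear_combination h3 - (n:ℝ) * h1
  have hS1 := summable_nc (q := q+1) (by omega)
  have hS2 := summable_c (q := q+1) (by omega)
  have hS : Summable (fun n : ℕ => ((q:ℝ) * n - 1/4) * c (q+1) n) := by
    have := (hS1.mul_left (q:ℝ)).sub (hS2.mul_left (1/4 : ℝ))
    convert this using 2 with n
    · rfl
    ring
  have key := tele hd hS (tendsto_nc hq)
  simp only [Nat.cast_zero, zero_mul, zero_sub, neg_zero, sub_zero] at key
  have hsplit : ∑' n, ((q:ℝ) * n - 1/4) * c (q+1) n
      = (q:ℝ) * (∑' n : ℕ, (n:ℝ) * c (q+1) n) - (1/4) * ∑' n, c (q+1) n := by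
    rw [← tsum_mul_left, ← tsum_mul_left, ← Summable.tsum_sub (hS1.mul_left _) (hS2.mul_left _)]
    congr 1; funext n; ring
  rw [hsplit] at key
  linarith [key]

lemma T2 {q : ℕ} (hq : 2 ≤ q) :
    ((q:ℝ) - 1) * ∑' n : ℕ, (n:ℝ)^2 * c (q+1) n
      = (5/4) * ∑' n : ℕ, (n:ℝ) * c (q+1) n + (1/4) * ∑' n, c (q+1) n := by
  have hd : ∀ n : ℕ, (((q:ℝ) - 1) * n^2 - (5/4) * n - 1/4) * c (q+1) n
      = (fun n : ℕ => (n:ℝ)^2 * c q n) n - (fun n : ℕ => (n:ℝ)^2 * c q n) (n+1) := by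
    intro n
    have h1 := c_rel1 q n
    have h3 := c_rel3 q n
    push_cast at h1 h3 ⊢
    linear_combination ((n:ℝ)+1) * h3 - (n:ℝ)^2 * h1
  have hS1 := summable_n2c (q := q+1) (by omega)
  have hS2 := summable_nc (q := q+1) (by omega)
  have hS3 := summable_c (q := q+1) (by omega)
  have hS : Summable (fun n : ℕ => (((q:ℝ) - 1) * n^2 - (5/4) * n - 1/4) * c (q+1) n) := by
    have := ((hS1.mul_left ((q:ℝ)-1)).sub (hS2.mul_left (5/4 : ℝ))).sub (hS3.mul_left (1/4 : ℝ))
    convert this using 2 with n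
    · rfl
    ring
  have key := tele hd hS (tendsto_n2c hq)
  simp only [Nat.cast_zero, zero_pow, zero_mul, zero_sub, neg_zero, sub_zero, ne_eq,
    OfNat.ofNat_ne_zero, not_false_eq_true] at key
  have hsplit : ∑' n, (((q:ℝ) - 1) * n^2 - (5/4) * n - 1/4) * c (q+1) n
      = ((q:ℝ) - 1) * (∑' n : ℕ, (n:ℝ)^2 * c (q+1) n) - (5/4) * (∑' n : ℕ, (n:ℝ) * c (q+1) n)
        - (1/4) * ∑' n, c (q+1) n := by
    rw [← tsum_mul_left, ← tsum_mul_left, ← tsum_mul_left,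
      ← Summable.tsum_sub (hS1.mul_left _) (hS2.mul_left _),
      ← Summable.tsum_sub ((hS1.mul_left _).sub (hS2.mul_left _)) (hS3.mul_left _)]
    congr 1; funext n; ring
  rw [hsplit] at key
  linarith [key]

lemma Gamma_ne {x : ℝ} (hx : 0 < x) : Real.Gamma x ≠ 0 := (Real.Gamma_pos_of_pos hx).ne'

lemma M0 (q : ℕ) (hq : 1 ≤ q) :
    ∑' n, c q n = Real.Gamma q / Real.Gamma ((q:ℝ) + 1/2)^2 := by
  induction q, hq using Nat.le_induction with
  | base =>
      rw [base]
      have h12 : Real.Gamma ((1:ℕ):ℝ) = 1 := by norm_num [Real.Gamma_one]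
      have h32 : Real.Gamma (((1:ℕ):ℝ) + 1/2) = (1/2) * Real.sqrt π := by
        have : ((1:ℕ):ℝ) + 1/2 = 1/2 + 1 := by norm_num
        rw [this, Real.Gamma_add_one (by norm_num), Real.Gamma_one_half_eq]
      rw [h12, h32]
      have : ((1:ℝ)/2 * Real.sqrt π)^2 = π/4 := by
        rw [mul_pow, Real.sq_sqrt Real.pi_pos.le]; ring
      rw [this]
      field_simp
  | succ q hq ih =>
      have h1 : ∑' n, c q n = (∑' n : ℕ, (n:ℝ) * c (q+1) n) + ((q:ℝ)+1) * ∑' n, c (q+1) n := by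
        rw [← tsum_mul_left, ← Summable.tsum_add (summable_nc (by omega)) ((summable_c (by omega)).mul_left _)]
        apply tsum_congr
        intro n
        rw [c_rel1 q n]
        ring
      have h2 := T1 hq
      have hq0 : ((q:ℝ)) ≠ 0 := Nat.cast_ne_zero.mpr (by omega)
      rw [ih] at h1
      have hX : ((4:ℝ)*q^2 + 4*q + 1) * (∑' n, c (q+1) n)
          = 4*(q:ℝ) * (Real.Gamma q / Real.Gamma ((q:ℝ)+1/2)^2) := by
        linear_combination (-4)*(q:ℝ)*h1 - 4*h2
      have hA : Real.Gamma ((q:ℝ)+1/2) ≠ 0 := Gamma_ne (by positivity)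
      have hG1 : Real.Gamma ((q:ℝ)+1) = (q:ℝ) * Real.Gamma (q:ℝ) :=
        Real.Gamma_add_one hq0
      have hG2 : Real.Gamma ((q:ℝ)+1+1/2) = ((q:ℝ)+1/2) * Real.Gamma ((q:ℝ)+1/2) := by
        have he : (q:ℝ)+1+1/2 = ((q:ℝ)+1/2)+1 := by ring
        rw [he, Real.Gamma_add_one (by positivity)]
      push_cast
      rw [hG1, hG2]
      field_simp at hX ⊢
      linear_combination hX
end S13

open S13

theorem stmt13 (p : ℕ) (hp : 3 ≤ p) (f₁ f₂ : ℝ) :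
    ∑' n : ℕ, (poch (1/2) n / n.factorial) ^ 2 *
        (((n : ℝ) + f₁) * ((n : ℝ) + f₂) / poch ((n : ℝ) + 1) p) =
      Real.Gamma p / Real.Gamma (p + 1/2) ^ 2 *
        (f₁ * f₂ + (f₁ + f₂ + 1) / (4 * ((p : ℝ) - 1)) +
          9 / (16 * ((p : ℝ) - 1) * ((p : ℝ) - 2))) := by
  have hp1 : (1:ℝ) ≤ (p:ℝ) - 0 := by
    have : (3:ℝ) ≤ (p:ℝ) := by exact_mod_cast hp
    linarith
  have hp3 : (3:ℝ) ≤ (p:ℝ) := by exact_mod_cast hp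
  have hpm1 : ((p:ℝ) - 1) ≠ 0 := by linarith
  have hpm2 : ((p:ℝ) - 2) ≠ 0 := by linarith
  -- rewrite each term
  have hterm : ∀ n : ℕ, (poch (1/2) n / n.factorial) ^ 2 *
        (((n : ℝ) + f₁) * ((n : ℝ) + f₂) / poch ((n : ℝ) + 1) p)
      = f₁ * f₂ * c p n + (f₁ + f₂) * ((n:ℝ) * c p n) + (n:ℝ)^2 * c p n := by
    intro n
    rw [c, A]
    have h := (pochn_pos n p).ne'
    field_simp
    ring
  rw [tsum_congr hterm]
  have Sc := summable_c (q := p) (by omega)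
  have Snc := summable_nc (q := p) (by omega)
  have Sn2c := summable_n2c (q := p) (by omega)
  rw [Summable.tsum_add ((Sc.mul_left _).add (Snc.mul_left _)) Sn2c,
    Summable.tsum_add (Sc.mul_left _) (Snc.mul_left _), tsum_mul_left, tsum_mul_left]
  -- values
  have hM0 : ∑' n, c p n = Real.Gamma p / Real.Gamma ((p:ℝ) + 1/2)^2 := M0 p (by omega)
  have e1 : ((p:ℝ) - 1) * ∑' n : ℕ, (n:ℝ) * c p n = (1/4) * ∑' n, c p n := by
    have h := T1 (q := p - 1) (by omega)
    have hc : p - 1 + 1 = p := by omega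
    rw [hc] at h
    have hcast : ((p - 1 : ℕ) : ℝ) = (p:ℝ) - 1 := by
      push_cast [Nat.cast_sub (by omega : 1 ≤ p)]
      ring
    rw [hcast] at h
    exact h
  have e2 : ((p:ℝ) - 2) * ∑' n : ℕ, (n:ℝ)^2 * c p n
      = (5/4) * ∑' n : ℕ, (n:ℝ) * c p n + (1/4) * ∑' n, c p n := by
    have h := T2 (q := p - 1) (by omega)
    have hc : p - 1 + 1 = p := by omega
    rw [hc] at h
    have hcast : ((p - 1 : ℕ) : ℝ) - 1 = (p:ℝ) - 2 := by
      push_cast [Nat.cast_sub (by omega : 1 ≤ p)]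
      ring
    rw [hcast] at h
    exact h
  have hG : Real.Gamma ((p:ℝ) + 1/2) ≠ 0 := Gamma_ne (by positivity)
  have hv1 : ∑' n : ℕ, (n:ℝ) * c p n
      = Real.Gamma p / Real.Gamma ((p:ℝ) + 1/2)^2 / (4 * ((p:ℝ) - 1)) := by
    rw [hM0] at e1
    field_simp at e1 ⊢
    linear_combination e1
  have hv2 : ∑' n : ℕ, (n:ℝ)^2 * c p n
      = (5/4 * (Real.Gamma p / Real.Gamma ((p:ℝ) + 1/2)^2 / (4 * ((p:ℝ) - 1)))
          + 1/4 * (Real.Gamma p / Real.Gamma ((p:ℝ) + 1/2)^2)) / ((p:ℝ) - 2) := by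
    rw [eq_div_iff hpm2]
    rw [hM0, hv1] at e2
    linarith
  rw [hM0, hv1, hv2]
  field_simp
  ring
end

section
/- For real a, b with c − a − b > 0 and c not a nonpositive integer, the Gauss hypergeometric series ∑_{n=0}^∞ (a)_n (b)_n / ((c)_n n!) converges and equals Γ(c) Γ(c − a − b) / (Γ(c − a) Γ(c − b)). -/
open Real BigOperators

open Filter Topology

namespace G15

noncomputable def T (a b c : ℝ) (n : ℕ) : ℝ := poch a n * poch b n / (poch c n * n.factorial)

noncomputable def S (a b c : ℝ) : ℝ := ∑' n, T a b c n

noncomputable def v (γ : ℝ) (n : ℕ) : ℝ := n.factorial / poch γ n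

-- from a.lean


lemma poch_zero (a : ℝ) : poch a 0 = 1 := by simp [poch]

lemma poch_succ (a : ℝ) (n : ℕ) : poch a (n + 1) = poch a n * (a + n) := by
  simp [poch, Finset.prod_range_succ]

lemma poch_pos {a : ℝ} (ha : 0 < a) (n : ℕ) : 0 < poch a n := by
  apply Finset.prod_pos; intro i _; positivity

lemma poch_nonneg {a : ℝ} (ha : 0 ≤ a) (n : ℕ) : 0 ≤ poch a n := by
  apply Finset.prod_nonneg; intro i _; positivity

lemma poch_ne_zero {a : ℝ} (ha : ∀ i : ℕ, a + i ≠ 0) (n : ℕ) : poch a n ≠ 0 :=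
  Finset.prod_ne_zero_iff.2 fun i _ => ha i

lemma abs_poch_le {a A : ℝ} (hA : |a| ≤ A) (n : ℕ) : |poch a n| ≤ poch A n := by
  rw [poch, poch, Finset.abs_prod]
  apply Finset.prod_le_prod (fun i _ => abs_nonneg _)
  intro i _
  calc |a + (i:ℝ)| ≤ |a| + |(i:ℝ)| := abs_add_le _ _
    _ ≤ A + i := by rw [abs_of_nonneg (by positivity : (0:ℝ) ≤ (i:ℝ))]; linarith

lemma poch_le_poch {a b : ℝ} (h0 : 0 ≤ a) (hab : a ≤ b) (n : ℕ) : poch a n ≤ poch b n := by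
  apply Finset.prod_le_prod (fun i _ => by positivity)
  intro i _; linarith

lemma gammaSeq_eq (s : ℝ) (n : ℕ) : Real.GammaSeq s n = (n:ℝ) ^ s * n.factorial / poch s (n+1) := rfl


-- from b.lean


lemma v_pos {γ : ℝ} (hγ : 0 < γ) (n : ℕ) : 0 < v γ n := by
  unfold v
  have := poch_pos hγ n
  have : (0:ℝ) < n.factorial := by positivity
  positivity

lemma v_succ {γ : ℝ} (hγ : 0 < γ) (n : ℕ) : v γ (n+1) = v γ n * (n+1) / (γ + n) := by
  unfold v
  rw [poch_succ]
  have h1 := (poch_pos hγ n).ne'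
  have h2 : γ + (n:ℝ) ≠ 0 := by positivity
  push_cast [Nat.factorial_succ]
  field_simp

lemma v_sum {γ : ℝ} (hγ : 2 < γ) (N : ℕ) :
    (γ - 2) * ∑ n ∈ Finset.range N, v γ n = (γ - 1) - (N + γ - 1) * v γ N := by
  have hγ0 : 0 < γ := by linarith
  induction N with
  | zero => simp [v, poch]
  | succ N ih =>
    rw [Finset.sum_range_succ, mul_add, ih, v_succ hγ0]
    have h2 : γ + (N:ℝ) ≠ 0 := by positivity
    push_cast
    field_simp
    ring

lemma v_summable {γ : ℝ} (hγ : 2 < γ) : Summable (v γ) := by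
  have hγ0 : 0 < γ := by linarith
  apply summable_of_sum_range_le (c := (γ - 1)/(γ - 2)) (fun n => (v_pos hγ0 n).le)
  intro N
  have h := v_sum hγ N
  have hN : 0 ≤ ((N:ℝ) + γ - 1) * v γ N := by
    have h1 := (v_pos hγ0 N).le
    have h2 : (0:ℝ) ≤ (N:ℝ) + γ - 1 := by
      have : (0:ℝ) ≤ (N:ℝ) := Nat.cast_nonneg N
      linarith
    positivity
  rw [le_div_iff₀ (by linarith : (0:ℝ) < γ - 2)]
  nlinarith [v_pos hγ0 N]

lemma v_mul_tendsto {γ : ℝ} (hγ : 2 < γ) :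
    Tendsto (fun n : ℕ => (n:ℝ) * v γ n) atTop (𝓝 0) := by
  have hγ0 : 0 < γ := by linarith
  rw [← Filter.tendsto_add_atTop_iff_nat 1]
  have h1 : Tendsto (fun n : ℕ => ((n:ℝ)+1)^2 * (n:ℝ)^(-γ)) atTop (𝓝 0) := by
    have hb : Tendsto (fun n : ℕ => (1 + 1/(n:ℝ))^2 * (n:ℝ)^(2-γ)) atTop (𝓝 ((1+0)^2 * 0)) := by
      apply Tendsto.mul
      · exact (((tendsto_const_nhds (x := (1:ℝ))).add
          tendsto_one_div_atTop_nhds_zero_nat)).pow 2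
      · have := (tendsto_rpow_neg_atTop (y := γ - 2) (by linarith)).comp
          (tendsto_natCast_atTop_atTop (R := ℝ))
        convert this using 2 with n
        rw [neg_sub]
        rfl
    simp only [add_zero, one_pow, mul_zero] at hb
    apply hb.congr'
    filter_upwards [eventually_ge_atTop 1] with n hn
    have hn0 : (0:ℝ) < (n:ℝ) := by exact_mod_cast hn
    have hsplit : (n:ℝ)^(2-γ) = (n:ℝ)^2 * (n:ℝ)^(-γ) := by
      rw [← Real.rpow_natCast (n:ℝ) 2, ← Real.rpow_add hn0]
      norm_num
      rw [sub_eq_add_neg]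
    rw [hsplit]
    field_simp
  have key : ∀ᶠ n : ℕ in atTop,
      (((n:ℕ)+1:ℕ):ℝ) * v γ ((n:ℕ)+1) = (((n:ℝ)+1)^2 * (n:ℝ)^(-γ)) * Real.GammaSeq γ n := by
    filter_upwards [eventually_ge_atTop 1] with n hn
    have hn0 : (0:ℝ) < (n:ℝ) := by exact_mod_cast hn
    rw [gammaSeq_eq]
    unfold v
    have hp := (poch_pos hγ0 (n+1)).ne'
    have hrn : (n:ℝ) ^ (-γ) = ((n:ℝ)^γ)⁻¹ := Real.rpow_neg hn0.le γ
    have hγn : (0:ℝ) < (n:ℝ)^γ := Real.rpow_pos_of_pos hn0 γ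
    push_cast [Nat.factorial_succ]
    rw [hrn]
    field_simp
  have := (h1.mul (Real.GammaSeq_tendsto_Gamma γ))
  rw [zero_mul] at this
  exact this.congr' (key.mono fun n hn => hn.symm)


-- from c.lean

variable {a b c : ℝ}

lemma hcz (hc : ∀ n : ℕ, c ≠ -(n : ℝ)) : ∀ i : ℕ, c + (i:ℝ) ≠ 0 := by
  intro i hi
  exact hc i (by linarith)

lemma T_succ (hc : ∀ n : ℕ, c ≠ -(n : ℝ)) (n : ℕ) :
    T a b c (n+1) = T a b c n * ((a+n)*(b+n)/((c+n)*((n:ℝ)+1))) := by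
  unfold T
  rw [poch_succ, poch_succ, poch_succ]
  have h1 : poch c n ≠ 0 := poch_ne_zero (hcz hc) n
  have h2 : c + (n:ℝ) ≠ 0 := hcz hc n
  have h3 : (n.factorial : ℝ) ≠ 0 := by positivity
  have h4 : ((n:ℝ)+1) ≠ 0 := by positivity
  push_cast [Nat.factorial_succ]
  field_simp

lemma bound_T (h : 0 < c - a - b) (hc : ∀ n : ℕ, c ≠ -(n : ℝ)) :
    ∃ (N : ℕ) (C : ℝ), 0 ≤ C ∧ ∀ n, N ≤ n → |T a b c n| ≤ C * v (2 + (c-a-b)/2) n := by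
  set δ := c - a - b with hδ
  set γ := 2 + δ/2 with hγdef
  set p : ℝ := 2*c + 1 - (a*b + a*γ + b*γ) with hp
  set q : ℝ := c - a*b*γ with hq
  set N : ℕ := ⌈max (|a|+|b|+|c|+1) (max 1 ((|p|+|q|)*2/δ))⌉₊ with hN
  clear_value δ γ p q N
  have hγ2 : 2 < γ := by rw [hγdef]; linarith
  have hγ0 : 0 < γ := by linarith
  have hNa : |a|+|b|+|c|+1 ≤ (N:ℝ) := by
    rw [hN]; exact le_trans (le_max_left _ _) (Nat.le_ceil _)
  have hN1 : (1:ℝ) ≤ (N:ℝ) := by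
    rw [hN]; exact le_trans (le_trans (le_max_left _ _) (le_max_right _ _)) (Nat.le_ceil _)
  have hNpq : (|p|+|q|)*2/δ ≤ (N:ℝ) := by
    rw [hN]; exact le_trans (le_trans (le_max_right _ _) (le_max_right _ _)) (Nat.le_ceil _)
  have key : ∀ n : ℕ, N ≤ n → (a+n)*(b+n)*(γ+n) ≤ (c+n)*(((n:ℝ)+1)*((n:ℝ)+1)) := by
    intro n hn
    have hn' : (N:ℝ) ≤ (n:ℝ) := by exact_mod_cast hn
    have h1 : (1:ℝ) ≤ (n:ℝ) := le_trans hN1 hn'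
    have h2 : (|p|+|q|)*2/δ ≤ (n:ℝ) := le_trans hNpq hn'
    have h3 : (|p|+|q|) ≤ (δ/2) * (n:ℝ) := by
      rw [div_le_iff₀ (by linarith : (0:ℝ) < δ)] at h2
      linarith
    have hpabs : -|p| ≤ p := neg_abs_le p
    have hqabs : -|q| ≤ q := neg_abs_le q
    have habs0 : 0 ≤ |p| := abs_nonneg p
    have hqabs0 : 0 ≤ |q| := abs_nonneg q
    have expand : (c+(n:ℝ))*(((n:ℝ)+1)*((n:ℝ)+1)) - (a+n)*(b+n)*(γ+n)
        = (δ/2)*(n:ℝ)^2 + p*(n:ℝ) + q := by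
      simp only [hp, hq, hγdef, hδ]
      ring
    have h4 : (|p|+|q|) * (n:ℝ) ≤ ((δ/2)*(n:ℝ))*(n:ℝ) :=
      mul_le_mul_of_nonneg_right h3 (by positivity)
    have h5 : |q| ≤ |q| * (n:ℝ) := le_mul_of_one_le_right hqabs0 h1
    have h6 : -p*(n:ℝ) ≤ |p| * (n:ℝ) :=
      mul_le_mul_of_nonneg_right (neg_le_abs p) (by positivity)
    have hsq : (δ/2) * (n:ℝ) * (n:ℝ) = δ/2 * (n:ℝ)^2 := by ring
    linarith [h4, h5, h6, expand, hsq, hqabs]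
  -- positivity of shifted parameters
  have hpos : ∀ n : ℕ, N ≤ n → 0 < a + (n:ℝ) ∧ 0 < b + (n:ℝ) ∧ 0 < c + (n:ℝ) := by
    intro n hn
    have hn' : (N:ℝ) ≤ (n:ℝ) := by exact_mod_cast hn
    have := neg_abs_le a; have := neg_abs_le b; have := neg_abs_le c
    have := abs_nonneg a; have := abs_nonneg b; have := abs_nonneg c
    refine ⟨by linarith, by linarith, by linarith⟩
  have hvN0 : 0 < v γ N := v_pos hγ0 N
  refine ⟨N, |T a b c N| / v γ N, div_nonneg (abs_nonneg _) hvN0.le, ?_⟩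
  have main : ∀ k : ℕ, |T a b c (N+k)| ≤ |T a b c N| / v γ N * v γ (N+k) := by
    intro k
    induction k with
    | zero =>
      have := (v_pos hγ0 N).ne'
      simp
      rw [div_mul_cancel₀]
      exact this
    | succ k ih =>
      have hn : N ≤ N + k := Nat.le_add_right N k
      obtain ⟨ha1, hb1, hc1⟩ := hpos (N+k) hn
      have hn1 : (0:ℝ) < (N+k:ℕ) + 1 := by positivity
      have hγn : (0:ℝ) < γ + (N+k:ℕ) := by positivity
      have hratio : (a+(N+k:ℕ))*(b+(N+k:ℕ))/((c+(N+k:ℕ))*(((N+k:ℕ):ℝ)+1))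
          ≤ (((N+k:ℕ):ℝ)+1)/(γ+(N+k:ℕ)) := by
        rw [div_le_div_iff₀ (by positivity) hγn]
        calc (a+(N+k:ℕ))*(b+(N+k:ℕ))*(γ+(N+k:ℕ))
            ≤ (c+(N+k:ℕ))*((((N+k:ℕ):ℝ)+1)*(((N+k:ℕ):ℝ)+1)) := key _ hn
          _ = (((N+k:ℕ):ℝ)+1)*((c+(N+k:ℕ))*(((N+k:ℕ):ℝ)+1)) := by ring
      have hTsucc := T_succ (a := a) (b := b) hc (N+k)
      have hrabs : abs ((a+((N+k:ℕ):ℝ))*(b+((N+k:ℕ):ℝ))/((c+((N+k:ℕ):ℝ))*(((N+k:ℕ):ℝ)+1)))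
          = (a+((N+k:ℕ):ℝ))*(b+((N+k:ℕ):ℝ))/((c+((N+k:ℕ):ℝ))*(((N+k:ℕ):ℝ)+1)) :=
        abs_of_nonneg (by positivity)
      have habs : |T a b c (N+k+1)| = |T a b c (N+k)| *
          ((a+(N+k:ℕ))*(b+(N+k:ℕ))/((c+(N+k:ℕ))*(((N+k:ℕ):ℝ)+1))) := by
        rw [hTsucc, abs_mul, hrabs]
      have hvsucc := v_succ hγ0 (N+k)
      have hC0 : 0 ≤ |T a b c N| / v γ N := by positivity
      have hv0 : 0 ≤ v γ (N+k) := (v_pos hγ0 _).le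
      show |T a b c ((N+k)+1)| ≤ |T a b c N| / v γ N * v γ ((N+k)+1)
      calc |T a b c ((N+k)+1)| = |T a b c (N+k)| *
            ((a+(N+k:ℕ))*(b+(N+k:ℕ))/((c+(N+k:ℕ))*(((N+k:ℕ):ℝ)+1))) := habs
        _ ≤ (|T a b c N| / v γ N * v γ (N+k)) *
            ((a+(N+k:ℕ))*(b+(N+k:ℕ))/((c+(N+k:ℕ))*(((N+k:ℕ):ℝ)+1))) := by
              apply mul_le_mul_of_nonneg_right ih (by positivity)
        _ ≤ (|T a b c N| / v γ N * v γ (N+k)) * ((((N+k:ℕ):ℝ)+1)/(γ+(N+k:ℕ))) := by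
              apply mul_le_mul_of_nonneg_left hratio (by positivity)
        _ = |T a b c N| / v γ N * v γ (N+k+1) := by
              rw [show N+k+1 = (N+k)+1 from rfl, hvsucc]
              push_cast
              ring
  intro n hn
  obtain ⟨k, rfl⟩ := Nat.exists_eq_add_of_le hn
  exact main k

lemma summable_T (h : 0 < c - a - b) (hc : ∀ n : ℕ, c ≠ -(n : ℝ)) :
    Summable (T a b c) := by
  obtain ⟨N, C, hC0, hbound⟩ := bound_T h hc
  have hγ2 : 2 < 2 + (c-a-b)/2 := by linarith
  rw [← summable_nat_add_iff N]
  apply Summable.of_norm_bounded (g := fun n => C * v (2 + (c-a-b)/2) (n + N))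
  · exact (summable_nat_add_iff N).mpr ((v_summable hγ2).mul_left C)
  · intro n
    exact hbound (n + N) (Nat.le_add_left N n)

lemma nT_tendsto (h : 0 < c - a - b) (hc : ∀ n : ℕ, c ≠ -(n : ℝ)) :
    Tendsto (fun n : ℕ => (n:ℝ) * T a b c n) atTop (𝓝 0) := by
  obtain ⟨N, C, hC0, hbound⟩ := bound_T h hc
  have hγ2 : 2 < 2 + (c-a-b)/2 := by linarith
  have hg : Tendsto (fun n : ℕ => C * ((n:ℝ) * v (2 + (c-a-b)/2) n)) atTop (𝓝 0) := by
    simpa using (v_mul_tendsto hγ2).const_mul C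
  refine squeeze_zero_norm' ?_ hg
  · filter_upwards [eventually_ge_atTop N] with n hn
    have := hbound n hn
    have hγ0 : (0:ℝ) < 2 + (c-a-b)/2 := by linarith
    have hv := (v_pos hγ0 n).le
    rw [Real.norm_eq_abs, abs_mul, abs_of_nonneg (Nat.cast_nonneg n : (0:ℝ) ≤ (n:ℝ))]
    calc (n:ℝ) * |T a b c n| ≤ (n:ℝ) * (C * v _ n) :=
          mul_le_mul_of_nonneg_left this (Nat.cast_nonneg n)
      _ = C * ((n:ℝ) * v _ n) := by ring


-- from d.lean

variable {a b c : ℝ}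

lemma poch_one (n : ℕ) : poch 1 n = n.factorial := by
  induction n with
  | zero => simp [poch]
  | succ n ih => rw [poch_succ, ih]; push_cast [Nat.factorial_succ]; ring

lemma poch_shift (s : ℝ) (n : ℕ) : poch s (n+1) = s * poch (s+1) n := by
  induction n with
  | zero => simp [poch]
  | succ n ih => rw [poch_succ, ih, poch_succ]; push_cast; ring

lemma hC1 (hc : ∀ n : ℕ, c ≠ -(n : ℝ)) : ∀ n : ℕ, c + 1 ≠ -(n : ℝ) := by
  intro n hn
  exact hc (n+1) (by push_cast; linarith)

lemma hCm (hc : ∀ n : ℕ, c ≠ -(n : ℝ)) (m : ℕ) : ∀ n : ℕ, c + (m:ℝ) ≠ -(n : ℝ) := by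
  intro n hn
  exact hc (n+m) (by push_cast; linarith)

lemma T_shift (hc : ∀ n : ℕ, c ≠ -(n : ℝ)) (n : ℕ) :
    T a b (c+1) n = T a b c n * (c / (c + n)) := by
  unfold T
  have hps : poch c (n+1) = c * poch (c+1) n := poch_shift c n
  rw [poch_succ] at hps
  have h0 : c ≠ 0 := by have := hc 0; simpa using this
  have h1 : poch c n ≠ 0 := poch_ne_zero (hcz hc) n
  have h2 : c + (n:ℝ) ≠ 0 := hcz hc n
  have h3 : (n.factorial : ℝ) ≠ 0 := by positivity
  have h4 : poch (c+1) n = poch c n * (c + n) / c := by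
    field_simp at hps ⊢
    linarith [hps]
  rw [h4]
  field_simp
  try ring_nf
  try exact Or.inl trivial

lemma key_step (hc : ∀ n : ℕ, c ≠ -(n : ℝ)) (N : ℕ) :
    c*(c-a-b) * T a b c N + c*(((N:ℝ)+1) * T a b c (N+1))
      = (c-a)*(c-b) * T a b (c+1) N + c*((N:ℝ) * T a b c N) := by
  rw [T_succ hc N, T_shift hc N]
  have h2 : c + (N:ℝ) ≠ 0 := hcz hc N
  have h4 : ((N:ℝ)+1) ≠ 0 := by positivity
  field_simp
  ring

lemma key_finite (hc : ∀ n : ℕ, c ≠ -(n : ℝ)) (N : ℕ) :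
    c*(c-a-b) * ∑ n ∈ Finset.range N, T a b c n
      = (c-a)*(c-b) * ∑ n ∈ Finset.range N, T a b (c+1) n - c * ((N:ℝ) * T a b c N) := by
  induction N with
  | zero => simp
  | succ N ih =>
    rw [Finset.sum_range_succ, Finset.sum_range_succ, mul_add, mul_add, ih]
    have := key_step (a := a) (b := b) hc N
    push_cast
    linarith [this]

lemma contiguous (h : 0 < c - a - b) (hc : ∀ n : ℕ, c ≠ -(n : ℝ)) :
    c*(c-a-b) * S a b c = (c-a)*(c-b) * S a b (c+1) := by
  have hs1 := (summable_T h hc).hasSum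
  have h' : 0 < (c+1) - a - b := by linarith
  have hs2 := (summable_T h' (hC1 hc)).hasSum
  have t1 : Tendsto (fun N => c*(c-a-b) * ∑ n ∈ Finset.range N, T a b c n)
      atTop (𝓝 (c*(c-a-b) * S a b c)) := hs1.tendsto_sum_nat.const_mul _
  have t2 : Tendsto (fun N => (c-a)*(c-b) * ∑ n ∈ Finset.range N, T a b (c+1) n
        - c * ((N:ℝ) * T a b c N)) atTop (𝓝 ((c-a)*(c-b) * S a b (c+1) - c * 0)) :=
    (hs2.tendsto_sum_nat.const_mul _).sub ((nT_tendsto h hc).const_mul c)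
  have := tendsto_nhds_unique (t1.congr (fun N => key_finite hc N)) t2
  rw [mul_zero, sub_zero] at this
  exact this

lemma chain (h : 0 < c - a - b) (hc : ∀ n : ℕ, c ≠ -(n : ℝ)) (m : ℕ) :
    poch c m * poch (c-a-b) m * S a b c
      = poch (c-a) m * poch (c-b) m * S a b (c + m) := by
  induction m with
  | zero => simp [poch]
  | succ m ih =>
    have hm : 0 < (c + m) - a - b := by
      have : (0:ℝ) ≤ (m:ℝ) := Nat.cast_nonneg m
      linarith
    have hcm := hCm hc m
    have hcont := contiguous (a := a) (b := b) hm hcm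
    rw [poch_succ, poch_succ, poch_succ, poch_succ]
    have hcast : c + ((m:ℕ)+1 : ℕ) = (c + m) + 1 := by push_cast; ring
    rw [hcast]
    have lhs : poch c m * (c + m) * (poch (c-a-b) m * (c-a-b+m)) * S a b c
        = (c+m) * ((c+m)-a-b) * (poch c m * poch (c-a-b) m * S a b c) := by ring
    calc poch c m * (c + m) * (poch (c-a-b) m * (c-a-b+m)) * S a b c
        = (c+m) * ((c+m)-a-b) * (poch c m * poch (c-a-b) m * S a b c) := by ring
      _ = (c+m) * ((c+m)-a-b) * (poch (c-a) m * poch (c-b) m * S a b (c + m)) := by rw [ih]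
      _ = poch (c-a) m * poch (c-b) m * ((c+m)*((c+m)-a-b) * S a b (c+m)) := by ring
      _ = poch (c-a) m * poch (c-b) m * (((c+m)-a)*((c+m)-b) * S a b ((c+m)+1)) := by rw [hcont]
      _ = poch (c-a) m * (c-a+m) * (poch (c-b) m * (c-b+m)) * S a b ((c+m)+1) := by ring


-- from e.lean

variable {a b c : ℝ}

lemma tail_tendsto (h : 0 < c - a - b) (hc : ∀ n : ℕ, c ≠ -(n : ℝ)) :
    Tendsto (fun m : ℕ => S a b (c + (m:ℝ))) atTop (𝓝 1) := by
  set A := max |a| |b| with hA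
  have hA0 : 0 ≤ A := le_trans (abs_nonneg a) (le_max_left _ _)
  set M : ℕ := ⌈|c| + 2*A + 2⌉₊ with hM
  have hMr : |c| + 2*A + 2 ≤ (M:ℝ) := Nat.le_ceil _
  have hcabs := neg_abs_le c
  have hcM : (2:ℝ) ≤ c + M := by linarith
  have hcM2A : 0 < (c + M) - A - A := by linarith
  rw [← Filter.tendsto_add_atTop_iff_nat M]
  -- dominating sequence
  have hDsum : Summable (T A A (c + M)) := by
    apply summable_T hcM2A
    intro n hn
    have : (0:ℝ) ≤ (n:ℝ) := Nat.cast_nonneg n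
    linarith [hn ▸ hcM]
  have hbound : ∀ (m : ℕ) (n : ℕ), ‖T a b (c + ((m + M : ℕ):ℝ)) n‖ ≤ T A A (c + M) n := by
    intro m n
    have hx : (0:ℝ) < c + M := by linarith
    have hle : c + (M:ℝ) ≤ c + ((m + M : ℕ):ℝ) := by push_cast; linarith [Nat.cast_nonneg (α := ℝ) m]
    have hp1 : 0 < poch (c + (M:ℝ)) n := poch_pos (by linarith) n
    have hp2 : poch (c + (M:ℝ)) n ≤ poch (c + ((m + M : ℕ):ℝ)) n := poch_le_poch hx.le hle n
    have hf : (0:ℝ) < n.factorial := by positivity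
    have hnum : |poch a n * poch b n| ≤ poch A n * poch A n := by
      rw [abs_mul]
      exact mul_le_mul (abs_poch_le (le_max_left _ _) n) (abs_poch_le (le_max_right _ _) n)
        (abs_nonneg _) (poch_nonneg hA0 n)
    rw [Real.norm_eq_abs]
    unfold T
    have hpx : (0:ℝ) < poch (c + ((m + M:ℕ):ℝ)) n := lt_of_lt_of_le hp1 hp2
    rw [abs_div, abs_of_pos (mul_pos hpx hf)]
    apply div_le_div₀ (mul_nonneg (poch_nonneg hA0 n) (poch_nonneg hA0 n)) hnum (mul_pos hp1 hf)
    exact mul_le_mul_of_nonneg_right hp2 hf.le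
  have hlim : ∀ n : ℕ, Tendsto (fun m : ℕ => T a b (c + ((m + M : ℕ):ℝ)) n) atTop
      (𝓝 (if n = 0 then (1:ℝ) else 0)) := by
    intro n
    match n with
    | 0 => simp [T, poch]
    | (k+1) =>
      simp only [if_neg (Nat.succ_ne_zero k)]
      have key : ∀ m : ℕ, ‖T a b (c + ((m + M : ℕ):ℝ)) (k+1)‖
          ≤ (poch A (k+1) * poch A (k+1)) / (c + ((m + M : ℕ):ℝ)) := by
        intro m
        have hx : (2:ℝ) ≤ c + ((m + M:ℕ):ℝ) := by
          push_cast
          linarith [Nat.cast_nonneg (α := ℝ) m]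
        have hx0 : (0:ℝ) < c + ((m + M:ℕ):ℝ) := by linarith
        have hden : c + ((m + M:ℕ):ℝ) ≤ poch (c + ((m + M:ℕ):ℝ)) (k+1) * (k+1).factorial := by
          have h1 : poch (1:ℝ) k ≤ poch (c + ((m + M:ℕ):ℝ) + 1) k :=
            poch_le_poch zero_le_one (by linarith) k
          have h2 : (1:ℝ) ≤ poch (c + ((m + M:ℕ):ℝ) + 1) k := by
            rw [poch_one] at h1
            calc (1:ℝ) ≤ k.factorial := by exact_mod_cast Nat.one_le_iff_ne_zero.mpr k.factorial_ne_zero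
              _ ≤ _ := h1
          have h3 : (1:ℝ) ≤ (k+1).factorial := by
            exact_mod_cast Nat.one_le_iff_ne_zero.mpr (k+1).factorial_ne_zero
          calc c + ((m + M:ℕ):ℝ) = (c + ((m + M:ℕ):ℝ)) * 1 * 1 := by ring
            _ ≤ (c + ((m + M:ℕ):ℝ)) * poch (c + ((m + M:ℕ):ℝ) + 1) k * (k+1).factorial := by
                apply mul_le_mul (mul_le_mul_of_nonneg_left h2 hx0.le) h3 zero_le_one
                exact mul_nonneg hx0.le (by linarith)
            _ = poch (c + ((m + M:ℕ):ℝ)) (k+1) * (k+1).factorial := by rw [poch_shift]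
        have hnum : |poch a (k+1) * poch b (k+1)| ≤ poch A (k+1) * poch A (k+1) := by
          rw [abs_mul]
          exact mul_le_mul (abs_poch_le (le_max_left _ _) _) (abs_poch_le (le_max_right _ _) _)
            (abs_nonneg _) (poch_nonneg hA0 _)
        have hfk : (0:ℝ) < ((k+1).factorial : ℝ) := by positivity
        have hpx : (0:ℝ) < poch (c + ((m + M:ℕ):ℝ)) (k+1) := poch_pos (by linarith) (k+1)
        rw [Real.norm_eq_abs]
        unfold T
        rw [abs_div, abs_of_pos (mul_pos hpx hfk)]
        exact div_le_div₀ (mul_nonneg (poch_nonneg hA0 _) (poch_nonneg hA0 _)) hnum hx0 hden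
      apply squeeze_zero_norm key
      apply Tendsto.div_atTop (tendsto_const_nhds)
      apply tendsto_atTop_add_const_left
      have : Tendsto (fun m : ℕ => ((m + M : ℕ):ℝ)) atTop atTop := by
        apply tendsto_natCast_atTop_atTop.comp
        exact tendsto_add_atTop_nat M
      exact this
  have := tendsto_tsum_of_dominated_convergence (𝓕 := atTop) hDsum hlim
    (Filter.Eventually.of_forall hbound)
  have hone : ∑' n : ℕ, (if n = 0 then (1:ℝ) else 0) = 1 := tsum_ite_eq 0 1
  rw [hone] at this
  exact this

-- from f.lean

variable {a b c : ℝ}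

lemma poch_eq_zero_of {s : ℝ} {k : ℕ} (hs : s = -(k:ℝ)) {m : ℕ} (hm : k < m) :
    poch s m = 0 := by
  apply Finset.prod_eq_zero (Finset.mem_range.mpr hm)
  rw [hs]; ring

lemma nonpos_int_cases (s : ℝ) : (∃ k : ℕ, s = -(k:ℝ)) ∨ (∀ k : ℕ, s ≠ -(k:ℝ)) := by
  by_cases h : ∃ k : ℕ, s = -(k:ℝ)
  · exact Or.inl h
  · push_neg at h; exact Or.inr h

lemma prod_tendsto (h : 0 < c - a - b) (hc : ∀ n : ℕ, c ≠ -(n : ℝ)) :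
    Tendsto (fun m : ℕ => poch (c-a) m * poch (c-b) m / (poch c m * poch (c-a-b) m))
      atTop (𝓝 (Real.Gamma c * Real.Gamma (c-a-b) / (Real.Gamma (c-a) * Real.Gamma (c-b)))) := by
  rcases nonpos_int_cases (c-a) with ⟨k, hk⟩ | hna
  · have hΓ : Real.Gamma (c-a) = 0 := by rw [hk]; exact Real.Gamma_neg_nat_eq_zero k
    rw [hΓ, zero_mul, div_zero]
    apply Tendsto.congr' _ tendsto_const_nhds
    filter_upwards [eventually_gt_atTop k] with m hm
    rw [poch_eq_zero_of hk hm, zero_mul, zero_div]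
  rcases nonpos_int_cases (c-b) with ⟨k, hk⟩ | hnb
  · have hΓ : Real.Gamma (c-b) = 0 := by rw [hk]; exact Real.Gamma_neg_nat_eq_zero k
    rw [hΓ, mul_zero, div_zero]
    apply Tendsto.congr' _ tendsto_const_nhds
    filter_upwards [eventually_gt_atTop k] with m hm
    rw [poch_eq_zero_of hk hm, mul_zero, zero_div]
  -- main case
  have hΓa : Real.Gamma (c-a) ≠ 0 := Real.Gamma_ne_zero hna
  have hΓb : Real.Gamma (c-b) ≠ 0 := Real.Gamma_ne_zero hnb
  have hiden : ∀ m : ℕ, 1 ≤ m →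
      poch (c-a) (m+1) * poch (c-b) (m+1) / (poch c (m+1) * poch (c-a-b) (m+1))
        = Real.GammaSeq c m * Real.GammaSeq (c-a-b) m
          / (Real.GammaSeq (c-a) m * Real.GammaSeq (c-b) m) := by
    intro m hm
    have hm0 : (0:ℝ) < (m:ℝ) := by exact_mod_cast hm
    have hna' : ∀ i : ℕ, (c-a) + (i:ℝ) ≠ 0 := by
      intro i hi; exact hna i (by linarith)
    have hnb' : ∀ i : ℕ, (c-b) + (i:ℝ) ≠ 0 := by
      intro i hi; exact hnb i (by linarith)
    have hd0 : ∀ i : ℕ, (c-a-b) + (i:ℝ) ≠ 0 := by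
      intro i
      have : (0:ℝ) ≤ (i:ℝ) := Nat.cast_nonneg i
      positivity
    have h1 : poch (c-a) (m+1) ≠ 0 := poch_ne_zero hna' (m+1)
    have h2 : poch (c-b) (m+1) ≠ 0 := poch_ne_zero hnb' (m+1)
    have h3 : poch c (m+1) ≠ 0 := poch_ne_zero (hcz hc) (m+1)
    have h4 : poch (c-a-b) (m+1) ≠ 0 := poch_ne_zero hd0 (m+1)
    have hf : (m.factorial : ℝ) ≠ 0 := by positivity
    have hr : ∀ s : ℝ, (0:ℝ) < (m:ℝ) ^ s := fun s => Real.rpow_pos_of_pos hm0 s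
    have hexp : (m:ℝ) ^ c * (m:ℝ) ^ (c-a-b) = (m:ℝ) ^ (c-a) * (m:ℝ) ^ (c-b) := by
      rw [← Real.rpow_add hm0, ← Real.rpow_add hm0]
      ring_nf
    have e1 : Real.GammaSeq c m * Real.GammaSeq (c-a-b) m
        = ((m:ℝ)^c * (m:ℝ)^(c-a-b)) * ((m.factorial:ℝ) * m.factorial)
          / (poch c (m+1) * poch (c-a-b) (m+1)) := by
      rw [gammaSeq_eq, gammaSeq_eq]; field_simp
    have e2 : Real.GammaSeq (c-a) m * Real.GammaSeq (c-b) m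
        = ((m:ℝ)^(c-a) * (m:ℝ)^(c-b)) * ((m.factorial:ℝ) * m.factorial)
          / (poch (c-a) (m+1) * poch (c-b) (m+1)) := by
      rw [gammaSeq_eq, gammaSeq_eq]; field_simp
    rw [e1, e2, hexp]
    have hK : ((m:ℝ)^(c-a) * (m:ℝ)^(c-b)) * ((m.factorial:ℝ) * m.factorial) ≠ 0 := by
      have := hr (c-a); have := hr (c-b)
      positivity
    field_simp
  have hlim : Tendsto (fun m : ℕ => Real.GammaSeq c m * Real.GammaSeq (c-a-b) m
      / (Real.GammaSeq (c-a) m * Real.GammaSeq (c-b) m)) atTop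
      (𝓝 (Real.Gamma c * Real.Gamma (c-a-b) / (Real.Gamma (c-a) * Real.Gamma (c-b)))) :=
    ((Real.GammaSeq_tendsto_Gamma c).mul (Real.GammaSeq_tendsto_Gamma (c-a-b))).div
      ((Real.GammaSeq_tendsto_Gamma (c-a)).mul (Real.GammaSeq_tendsto_Gamma (c-b)))
      (mul_ne_zero hΓa hΓb)
  rw [← Filter.tendsto_add_atTop_iff_nat 1]
  refine Tendsto.congr' ?_ hlim
  filter_upwards [eventually_ge_atTop 1] with m hm
  exact (hiden m hm).symm


-- from g.lean

theorem stmt15' (a b c : ℝ) (h : 0 < c - a - b) (hc : ∀ n : ℕ, c ≠ -(n : ℝ)) :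
    HasSum (fun n : ℕ => poch a n * poch b n / (poch c n * n.factorial))
      (Real.Gamma c * Real.Gamma (c - a - b) / (Real.Gamma (c - a) * Real.Gamma (c - b))) := by
  have hsum : Summable (T a b c) := summable_T h hc
  have hval : ∀ m : ℕ, S a b c
      = poch (c-a) m * poch (c-b) m / (poch c m * poch (c-a-b) m) * S a b (c + m) := by
    intro m
    have hch := chain h hc m
    have hd0 : ∀ i : ℕ, (c-a-b) + (i:ℝ) ≠ 0 := by
      intro i
      have : (0:ℝ) ≤ (i:ℝ) := Nat.cast_nonneg i
      positivity
    have hden : poch c m * poch (c-a-b) m ≠ 0 :=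
      mul_ne_zero (poch_ne_zero (hcz hc) m) (poch_ne_zero hd0 m)
    rw [div_mul_eq_mul_div, eq_div_iff hden]
    linarith [hch]
  have hT : Tendsto (fun m : ℕ =>
      poch (c-a) m * poch (c-b) m / (poch c m * poch (c-a-b) m) * S a b (c + m)) atTop
      (𝓝 (Real.Gamma c * Real.Gamma (c-a-b) / (Real.Gamma (c-a) * Real.Gamma (c-b)) * 1)) :=
    (prod_tendsto h hc).mul (tail_tendsto h hc)
  have hconst : Tendsto (fun _ : ℕ => S a b c) atTop (𝓝 (S a b c)) := tendsto_const_nhds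
  have heq := tendsto_nhds_unique (hconst.congr (fun m => hval m)) hT
  rw [mul_one] at heq
  have : HasSum (T a b c) (S a b c) := hsum.hasSum
  rw [heq] at this
  exact this


end G15

theorem stmt15 (a b c : ℝ) (h : 0 < c - a - b) (hc : ∀ n : ℕ, c ≠ -(n : ℝ)) :
    HasSum (fun n : ℕ => poch a n * poch b n / (poch c n * n.factorial))
      (Real.Gamma c * Real.Gamma (c - a - b) / (Real.Gamma (c - a) * Real.Gamma (c - b))) :=
  G15.stmt15' a b c h hc
end

section
/- For positive integers p > m and real f not a nonpositive integer, ∑_{n=0}^∞ ((1/2)_n)^2 (f+m)_n / ((p+1)_n (f)_n n!) = (p! Γ(p) / Γ(p+1/2)^2) · ∑_{k=0}^m (−1)^k binom(m,k) ((1/2)_k)^2 / ((f)_k (1−p)_k). -/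
open Real BigOperators

open Filter Topology

lemma poch_succ (a : ℝ) (n : ℕ) : poch a (n+1) = poch a n * (a + n) := by
  simp [poch, Finset.prod_range_succ]
lemma poch_pos {a : ℝ} (ha : 0 < a) (n : ℕ) : 0 < poch a n := by
  induction n with
  | zero => simp [poch]
  | succ n ih => rw [poch_succ]; positivity

lemma tendsto_nat_div_add (a : ℝ) (ha : 0 < a) :
    Tendsto (fun M : ℕ => (M:ℝ) / (a + M)) atTop (𝓝 1) := by
  have hM : Tendsto (fun M : ℕ => a + (M:ℝ)) atTop atTop :=
    tendsto_atTop_add_const_left _ _ tendsto_natCast_atTop_atTop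
  have h0 : Tendsto (fun M : ℕ => a / (a + (M:ℝ))) atTop (𝓝 0) :=
    Tendsto.div_atTop tendsto_const_nhds hM
  have := (tendsto_const_nhds (x := (1:ℝ)) (f := atTop (α := ℕ))).sub h0
  rw [sub_zero] at this
  refine this.congr fun M => ?_
  have hne : a + (M:ℝ) ≠ 0 := by positivity
  field_simp
  ring

-- R: poch a M / (M! * M^(a-1)) → 1/Γ(a)
lemma tendsto_poch_div (a : ℝ) (ha : 0 < a) :
    Tendsto (fun M : ℕ => poch a M / ((M.factorial : ℝ) * (M:ℝ) ^ (a - 1)))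
      atTop (𝓝 (1 / Real.Gamma a)) := by
  have hG := Real.GammaSeq_tendsto_Gamma a
  have hGne : Real.Gamma a ≠ 0 := (Real.Gamma_pos_of_pos ha).ne'
  have h1 : Tendsto (fun M : ℕ => (Real.GammaSeq a M)⁻¹ * ((M:ℝ) / (a + M)))
      atTop (𝓝 ((Real.Gamma a)⁻¹ * 1)) := (hG.inv₀ hGne).mul (tendsto_nat_div_add a ha)
  rw [mul_one, ← one_div] at h1
  refine h1.congr' ?_
  filter_upwards [eventually_ge_atTop 1] with M hM
  have hMpos : (0:ℝ) < M := by exact_mod_cast hM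
  have hprod : ∏ j ∈ Finset.range (M + 1), (a + (j:ℝ)) = poch a M * (a + M) := by
    rw [← poch_succ]; rfl
  have hpow : (M:ℝ) ^ a = (M:ℝ) ^ (a - 1) * M := by
    have h : (M:ℝ)^(a-1) * (M:ℝ)^(1:ℝ) = (M:ℝ)^a := by
      rw [← Real.rpow_add hMpos]; norm_num
    rw [← h, Real.rpow_one]
  rw [Real.GammaSeq, hprod, hpow]
  have h2 : (0:ℝ) < (M.factorial : ℝ) := by exact_mod_cast M.factorial_pos
  have h3 : (0:ℝ) < a + M := by positivity
  have h4 : (0:ℝ) < (M:ℝ) ^ (a-1) := Real.rpow_pos_of_pos hMpos _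
  field_simp

lemma tendsto_poch_ratio (a c : ℝ) (ha : 0 < a) (hc : 0 < c) :
    Tendsto (fun M : ℕ => poch a M ^ 2 * (M:ℝ) ^ (c + 1 - 2*a) /
        (poch c M * (M.factorial : ℝ))) atTop (𝓝 (Real.Gamma c / Real.Gamma a ^ 2)) := by
  have hA := tendsto_poch_div a ha
  have hC := tendsto_poch_div c hc
  have hCne : (1 : ℝ) / Real.Gamma c ≠ 0 :=
    one_div_ne_zero (Real.Gamma_pos_of_pos hc).ne'
  have h1 := ((hA.mul hA).div hC hCne)
  have hval : 1 / Real.Gamma a * (1 / Real.Gamma a) / (1 / Real.Gamma c) =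
      Real.Gamma c / Real.Gamma a ^ 2 := by
    have hane : Real.Gamma a ≠ 0 := (Real.Gamma_pos_of_pos ha).ne'
    have hcne : Real.Gamma c ≠ 0 := (Real.Gamma_pos_of_pos hc).ne'
    field_simp
  rw [hval] at h1
  refine h1.congr' ?_
  filter_upwards [eventually_ge_atTop 1] with M hM
  have hMpos : (0:ℝ) < M := by exact_mod_cast hM
  have h2 : (0:ℝ) < (M.factorial : ℝ) := by exact_mod_cast M.factorial_pos
  have h4 : (0:ℝ) < (M:ℝ) ^ (a-1) := Real.rpow_pos_of_pos hMpos _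
  have h5 : (0:ℝ) < (M:ℝ) ^ (c-1) := Real.rpow_pos_of_pos hMpos _
  have h6 : (0:ℝ) < poch c M := poch_pos hc M
  have hpow : (M:ℝ) ^ (c + 1 - 2*a) * ((M:ℝ) ^ (a-1) * (M:ℝ) ^ (a-1)) = (M:ℝ) ^ (c-1) := by
    rw [← Real.rpow_add hMpos, ← Real.rpow_add hMpos]; ring_nf
  simp only [Pi.div_apply, Pi.mul_apply]
  field_simp
  rw [← hpow]
  ring

lemma hasSum_of_tendsto_nonneg {f : ℕ → ℝ} (hf : ∀ n, 0 ≤ f n) {L : ℝ}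
    (h : Tendsto (fun M => ∑ n ∈ Finset.range M, f n) atTop (𝓝 L)) : HasSum f L := by
  have hmono : Monotone (fun M => ∑ n ∈ Finset.range M, f n) := by
    intro i j hij
    exact Finset.sum_le_sum_of_subset_of_nonneg (Finset.range_subset_range.2 hij)
      (fun k _ _ => hf k)
  have hbd : ∀ M, ∑ n ∈ Finset.range M, f n ≤ L := fun M => hmono.ge_of_tendsto h M
  have hs : Summable f := summable_of_sum_range_le hf hbd
  have h2 := hs.hasSum.tendsto_sum_nat
  have : (∑' n, f n) = L := tendsto_nhds_unique h2 h
  exact this ▸ hs.hasSum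

lemma poch_add (a : ℝ) (m n : ℕ) : poch a (m + n) = poch a m * poch (a + m) n := by
  induction n with
  | zero => simp [poch]
  | succ n ih => rw [← Nat.add_assoc, poch_succ, ih, poch_succ]; push_cast; ring

noncomputable def tt (a c : ℝ) (n : ℕ) : ℝ := poch a n ^ 2 / (poch c n * n.factorial)

lemma tt_nonneg {a c : ℝ} (ha : 0 < a) (hc : 0 < c) (n : ℕ) : 0 ≤ tt a c n := by
  have h1 := poch_pos ha n
  have h2 := poch_pos hc n
  have h3 : (0:ℝ) < n.factorial := by exact_mod_cast n.factorial_pos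
  exact div_nonneg (sq_nonneg _) (le_of_lt (mul_pos h2 h3))

lemma tt_succ {a c : ℝ} (ha : 0 < a) (hc : 0 < c) (M : ℕ) :
    tt a c (M+1) = tt a c M * (a+M)^2 / ((c+M)*(M+1)) := by
  have h2 := (poch_pos hc M).ne'
  have h3 : ((M.factorial : ℝ)) ≠ 0 := by exact_mod_cast M.factorial_pos.ne'
  have h4 : (0:ℝ) < c + M := by positivity
  have h5 : ((M:ℝ)+1) ≠ 0 := by positivity
  rw [tt, tt, poch_succ, poch_succ, Nat.factorial_succ]
  push_cast
  field_simp

lemma poch_shift (c : ℝ) (M : ℕ) : c * poch (c+1) M = poch c M * (c + M) := by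
  have h1 : poch c (1 + M) = poch c 1 * poch (c+1) M := by
    have := poch_add c 1 M; push_cast at this ⊢; simpa using this
  have h2 : poch c (M + 1) = poch c M * (c + M) := poch_succ c M
  rw [Nat.add_comm] at h1
  rw [← h2, h1]; simp [poch]

lemma tt_shift {a c : ℝ} (hc : 0 < c) (M : ℕ) :
    tt a c M * c = tt a (c+1) M * (c+M) := by
  have h3 : ((M.factorial : ℝ)) ≠ 0 := by exact_mod_cast M.factorial_pos.ne'
  have h2 := (poch_pos hc M).ne'
  have h5 : (0:ℝ) < c + M := by positivity
  have h6 := (poch_pos (by linarith : (0:ℝ) < c + 1) M).ne'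
  rw [tt, tt, div_mul_eq_mul_div, div_mul_eq_mul_div, div_eq_div_iff (by positivity) (by positivity)]
  linear_combination (poch a M ^ 2 * (M.factorial:ℝ)) * poch_shift c M

lemma tt_asym {a c : ℝ} (ha : 0 < a) (hc : 0 < c) :
    Tendsto (fun M : ℕ => tt a c M * (M:ℝ) ^ (c + 1 - 2*a)) atTop
      (𝓝 (Real.Gamma c / Real.Gamma a ^ 2)) := by
  refine (tendsto_poch_ratio a c ha hc).congr fun M => ?_
  rw [tt, div_mul_eq_mul_div]

lemma gauss_base {a : ℝ} (ha : 0 < a) :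
    HasSum (tt a (2*a+1))
      (Real.Gamma 1 * Real.Gamma (2*a+1) / Real.Gamma (a+1) ^ 2) := by
  have hc : (0:ℝ) < 2*a+1 := by linarith
  have hps : ∀ M : ℕ, ∑ n ∈ Finset.range M, tt a (2*a+1) n
      = M * (2*a+M) * tt a (2*a+1) M / a^2 := by
    intro M
    induction M with
    | zero => simp
    | succ M ih =>
      rw [Finset.sum_range_succ, ih, tt_succ ha hc]
      have h1 : (0:ℝ) < 2*a+1+M := by positivity
      have h2 : (0:ℝ) < (M:ℝ)+1 := by positivity
      push_cast
      field_simp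
      ring
  have hexp : 2*a+1 + 1 - 2*a = (2:ℝ) := by ring
  have hlim0 := tt_asym ha hc
  rw [hexp] at hlim0
  have h2 : Tendsto (fun M : ℕ => (M:ℝ)*(2*a+M)/(M:ℝ)^(2:ℝ)) atTop (𝓝 1) := by
    have h3 : Tendsto (fun M : ℕ => 2*a/(M:ℝ) + 1) atTop (𝓝 (0+1)) :=
      (tendsto_const_div_atTop_nhds_zero_nat (2*a)).add tendsto_const_nhds
    rw [zero_add] at h3
    refine h3.congr' ?_
    filter_upwards [eventually_ge_atTop 1] with M hM
    have hMpos : (0:ℝ) < M := by exact_mod_cast hM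
    have : ((M:ℝ))^(2:ℝ) = (M:ℝ)^(2:ℕ) := by
      rw [← Real.rpow_natCast (M:ℝ) 2]; norm_num
    rw [this]
    field_simp
  have hcomb : Tendsto (fun M : ℕ => ∑ n ∈ Finset.range M, tt a (2*a+1) n) atTop
      (𝓝 (1 * (Real.Gamma (2*a+1) / Real.Gamma a ^ 2) / a^2)) := by
    refine ((h2.mul hlim0).div_const (a^2)).congr' ?_
    filter_upwards [eventually_ge_atTop 1] with M hM
    have hMpos : (0:ℝ) < M := by exact_mod_cast hM
    have hr : ((M:ℝ))^(2:ℝ) ≠ 0 := (Real.rpow_pos_of_pos hMpos 2).ne'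
    rw [hps M]
    field_simp
  have hval : 1 * (Real.Gamma (2*a+1) / Real.Gamma a ^ 2) / a^2
      = Real.Gamma 1 * Real.Gamma (2*a+1) / Real.Gamma (a+1) ^ 2 := by
    rw [Real.Gamma_one, Real.Gamma_add_one ha.ne']
    have := (Real.Gamma_pos_of_pos ha).ne'
    field_simp
  rw [hval] at hcomb
  exact hasSum_of_tendsto_nonneg (tt_nonneg ha hc) hcomb

lemma gauss_step {a : ℝ} (ha : 0 < a) {N : ℕ} (hN : 1 ≤ N) {g : ℝ}
    (hsum : HasSum (tt a (2*a+N)) g) :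
    HasSum (tt a (2*a+N+1)) ((2*a+N)*N*g/(a+N)^2) := by
  set c : ℝ := 2*a + N with hcdef
  have hNpos : (0:ℝ) < N := by exact_mod_cast hN
  have hc : 0 < c := by positivity
  have hc1 : 0 < c + 1 := by linarith
  have haN : (0:ℝ) < a + N := by positivity
  -- partial sum identity
  have hps : ∀ M : ℕ, (a+N)^2 * ∑ n ∈ Finset.range M, tt a (c+1) n
      = c*N*(∑ n ∈ Finset.range M, tt a c n) + M*(c+M)*tt a (c+1) M := by
    intro M
    induction M with
    | zero => simp
    | succ M ih =>
      have hshift := tt_shift (a := a) hc M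
      have hsucc : tt a (c+1) (M+1) * ((c+1+M)*((M:ℝ)+1)) = tt a (c+1) M * (a+M)^2 := by
        rw [tt_succ ha hc1 M]
        have h4 : (0:ℝ) < c+1+M := by positivity
        have h5 : (0:ℝ) < (M:ℝ)+1 := by positivity
        field_simp
      rw [Finset.sum_range_succ, Finset.sum_range_succ]
      push_cast
      linear_combination ih - N * hshift - hsucc + ((M:ℝ)-N)*(tt a (c+1) M)*hcdef
  -- vanishing boundary term
  have hbdry : Tendsto (fun M : ℕ => (M:ℝ)*(c+M)*tt a (c+1) M) atTop (𝓝 0) := by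
    have hasym := tt_asym ha hc1
    have hexp : c + 1 + 1 - 2*a = (N:ℝ) + 2 := by rw [hcdef]; ring
    rw [hexp] at hasym
    have hz : Tendsto (fun M : ℕ => (M:ℝ)*(c+M)/(M:ℝ)^((N:ℝ)+2)) atTop (𝓝 0) := by
      have hg : Tendsto (fun M : ℕ => (c+1)/(M:ℝ)) atTop (𝓝 0) :=
        tendsto_const_div_atTop_nhds_zero_nat (c+1)
      refine squeeze_zero' ?_ ?_ hg
      · filter_upwards [eventually_ge_atTop 1] with M hM
        have hMpos : (0:ℝ) < M := by exact_mod_cast hM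
        positivity
      · filter_upwards [eventually_ge_atTop 1] with M hM
        have hMR : (1:ℝ) ≤ M := by exact_mod_cast hM
        have hMpos : (0:ℝ) < M := by linarith
        have hrw : (M:ℝ)^((N:ℝ)+2) = (M:ℝ)^(N+2:ℕ) := by
          rw [← Real.rpow_natCast (M:ℝ) (N+2)]; push_cast; ring_nf
        rw [hrw, div_le_div_iff₀ (by positivity) hMpos]
        have hp : (M:ℝ)^(3:ℕ) ≤ (M:ℝ)^(N+2:ℕ) :=
          pow_le_pow_right₀ hMR (by omega)
        have h23 : (M:ℝ)^(2:ℕ) ≤ (M:ℝ)^(3:ℕ) := pow_le_pow_right₀ hMR (by norm_num)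
        have h1 : (M:ℝ)*(c+M)*M ≤ (c+1)*(M:ℝ)^(3:ℕ) := by
          nlinarith [mul_le_mul_of_nonneg_left h23 hc.le]
        calc (M:ℝ)*(c+M)*M ≤ (c+1)*(M:ℝ)^(3:ℕ) := h1
          _ ≤ (c+1)*(M:ℝ)^(N+2:ℕ) := by nlinarith
    have := hz.mul hasym
    rw [zero_mul] at this
    refine this.congr' ?_
    filter_upwards [eventually_ge_atTop 1] with M hM
    have hMpos : (0:ℝ) < M := by exact_mod_cast hM
    have hr : ((M:ℝ))^((N:ℝ)+2) ≠ 0 := (Real.rpow_pos_of_pos hMpos _).ne'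
    field_simp
  -- combine
  have hS : Tendsto (fun M : ℕ => ∑ n ∈ Finset.range M, tt a c n) atTop (𝓝 g) :=
    hsum.tendsto_sum_nat
  have hcomb : Tendsto (fun M : ℕ => ∑ n ∈ Finset.range M, tt a (c+1) n) atTop
      (𝓝 ((c*N*g + 0)/(a+N)^2)) := by
    refine (((hS.const_mul (c*N)).add hbdry).div_const ((a+N)^2)).congr fun M => ?_
    rw [← hps M, mul_div_assoc, mul_comm]
    field_simp
  rw [add_zero] at hcomb
  have hval : c*N*g/(a+N)^2 = (2*a+N)*N*g/(a+N)^2 := by rw [hcdef]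
  rw [hval] at hcomb
  have : tt a (2*a+N+1) = tt a (c+1) := by rw [hcdef]
  rw [this]
  exact hasSum_of_tendsto_nonneg (tt_nonneg ha hc1) hcomb

lemma gauss {a : ℝ} (ha : 0 < a) : ∀ N : ℕ, 1 ≤ N →
    HasSum (tt a (2*a+N)) (Real.Gamma N * Real.Gamma (2*a+N) / Real.Gamma (a+N) ^ 2) := by
  refine Nat.le_induction ?_ ?_
  · have := gauss_base ha
    push_cast
    convert this using 3 <;> norm_num
  · intro N hN ih
    have hNpos : (0:ℝ) < N := by exact_mod_cast hN
    have haN : (0:ℝ) < a + N := by positivity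
    have hcN : (0:ℝ) < 2*a + N := by positivity
    have h := gauss_step ha hN ih
    have harg : 2*a + ((N:ℕ)+1:ℕ) = 2*a + N + 1 := by push_cast; ring
    have harg2 : a + (((N:ℕ)+1:ℕ):ℝ) = a + N + 1 := by push_cast; ring
    rw [harg, harg2]
    have hval : (2*a+N)*N*(Real.Gamma N * Real.Gamma (2*a+N) / Real.Gamma (a+N) ^ 2)/(a+N)^2
        = Real.Gamma ((N:ℕ)+1:ℕ) * Real.Gamma (2*a+N+1) / Real.Gamma (a+N+1) ^ 2 := by
      have e1 : Real.Gamma (((N:ℕ)+1:ℕ):ℝ) = N * Real.Gamma N := by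
        push_cast
        rw [Real.Gamma_add_one hNpos.ne']
      have e2 : Real.Gamma (2*a+N+1) = (2*a+N) * Real.Gamma (2*a+N) := by
        rw [Real.Gamma_add_one hcN.ne']
      have e3 : Real.Gamma (a+N+1) = (a+N) * Real.Gamma (a+N) := by
        rw [Real.Gamma_add_one haN.ne']
      rw [e1, e2, e3]
      have h4 : Real.Gamma (a+N) ≠ 0 := (Real.Gamma_pos_of_pos haN).ne'
      field_simp
    rw [← hval]
    exact h

lemma poch_one_add (a : ℝ) (m : ℕ) : poch a (1 + m) = a * poch (a + 1) m := by
  rw [poch_add]; simp [poch]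

lemma keyid : ∀ (m : ℕ) (f : ℝ) (n : ℕ),
    ∑ k ∈ Finset.range (m+1), (m.choose k : ℝ) * (n.descFactorial k : ℝ) * poch (f + k) (m - k)
      = poch (f + n) m := by
  intro m
  induction m with
  | zero => intro f n; simp [poch]
  | succ m ihm =>
    intro f n
    induction n with
    | zero =>
      rw [Finset.sum_eq_single 0]
      · simp [poch]
      · intro k _ hk
        obtain ⟨j, rfl⟩ : ∃ j, k = j + 1 := ⟨k - 1, (Nat.succ_pred_eq_of_pos (Nat.pos_of_ne_zero hk)).symm⟩
        simp [Nat.zero_descFactorial_succ]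
      · intro h; exact absurd (Finset.mem_range.2 (Nat.succ_pos _)) h
    | succ n ihn =>
      have hdesc : ∀ k : ℕ, (((n+1).descFactorial k : ℕ) : ℝ)
          = (n.descFactorial k : ℝ) + k * (n.descFactorial (k-1) : ℝ) := by
        intro k
        cases k with
        | zero => simp
        | succ k =>
          rcases le_or_gt k n with h | h
          · rw [Nat.succ_descFactorial_succ, Nat.descFactorial_succ]
            push_cast [Nat.cast_sub h]
            ring
          · have h1 : n.descFactorial (k+1) = 0 := Nat.descFactorial_eq_zero_iff_lt.2 (by omega)
            have h2 : (n+1).descFactorial (k+1) = 0 := Nat.descFactorial_eq_zero_iff_lt.2 (by omega)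
            have h3 : n.descFactorial k = 0 := Nat.descFactorial_eq_zero_iff_lt.2 (by omega)
            simp [h1, h2, h3]
            omega
      have hsplit : ∑ k ∈ Finset.range (m+2), ((m+1).choose k : ℝ) * ((n+1).descFactorial k : ℝ)
            * poch (f + k) (m + 1 - k)
          = (∑ k ∈ Finset.range (m+2), ((m+1).choose k : ℝ) * (n.descFactorial k : ℝ)
              * poch (f + k) (m + 1 - k))
            + ∑ k ∈ Finset.range (m+2), ((m+1).choose k : ℝ) * (k * (n.descFactorial (k-1) : ℝ))
              * poch (f + k) (m + 1 - k) := by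
        rw [← Finset.sum_add_distrib]
        refine Finset.sum_congr rfl fun k _ => ?_
        rw [hdesc k]; ring
      have hsecond : ∑ k ∈ Finset.range (m+2), ((m+1).choose k : ℝ) * (k * (n.descFactorial (k-1) : ℝ))
            * poch (f + k) (m + 1 - k)
          = ((m:ℝ)+1) * poch ((f+1) + n) m := by
        rw [Finset.sum_range_succ']
        simp only [Nat.cast_zero, zero_mul, mul_zero, add_zero]
        rw [← ihm (f+1) n, Finset.mul_sum]
        refine Finset.sum_congr rfl fun i _ => ?_
        have hch : ((m+1).choose (i+1) : ℝ) * ((i:ℝ)+1) = ((m:ℝ)+1) * (m.choose i : ℝ) := by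
          have := Nat.add_one_mul_choose_eq m i
          have : ((Nat.succ m * m.choose i : ℕ) : ℝ) = (((m+1).choose (i+1) * (i+1) : ℕ) : ℝ) := by
            rw [this]
          push_cast at this
          linarith
        have harg : f + ((i:ℝ)+1) = (f+1) + i := by ring
        have hsub : m + 1 - (i+1) = m - i := by omega
        rw [hsub]
        push_cast
        rw [harg]
        linear_combination ((n.descFactorial i : ℝ) * poch (f + 1 + (i:ℝ)) (m - i)) * hch
      rw [hsplit, ihn, hsecond]
      have e1 : poch (f + n) (m+1) = (f + n) * poch (f + n + 1) m := by
        have := poch_one_add (f + n) m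
        rw [← this]; rw [Nat.add_comm]
      have e2 : poch (f + ((n:ℝ)+1)) (m+1) = poch (f + n + 1) m * (f + n + 1 + m) := by
        have := poch_succ (f + (n:ℝ) + 1) m
        rw [← this]
        ring_nf
      push_cast
      rw [e1, e2]
      have e3 : (f+1) + (n:ℝ) = f + n + 1 := by ring
      rw [e3]
      ring

lemma neg_poch (p : ℕ) : ∀ k : ℕ, k < p →
    poch (1 - (p:ℝ)) k * Real.Gamma ((p:ℝ) - k) = (-1:ℝ)^k * Real.Gamma p := by
  intro k
  induction k with
  | zero => intro _; simp [poch]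
  | succ k ih =>
    intro hk
    have hk' : k < p := by omega
    have hpk : (0:ℝ) < (p:ℝ) - k - 1 := by
      have : (k:ℝ) + 1 < p := by exact_mod_cast hk
      linarith
    have e := Real.Gamma_add_one hpk.ne'
    have earg : (p:ℝ) - k - 1 + 1 = (p:ℝ) - k := by ring
    rw [earg] at e
    have earg2 : (p:ℝ) - ((k:ℕ)+1:ℕ) = (p:ℝ) - k - 1 := by push_cast; ring
    rw [earg2, poch_succ]
    push_cast
    linear_combination (-1:ℝ) * ih hk' + poch (1 - (p:ℝ)) k * e

lemma poch_ne_zero {a : ℝ} (ha : ∀ i : ℕ, a ≠ -(i:ℝ)) (n : ℕ) : poch a n ≠ 0 := by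
  induction n with
  | zero => simp [poch]
  | succ n ih =>
    rw [poch_succ]
    exact mul_ne_zero ih (fun h => ha n (by linarith [eq_neg_of_add_eq_zero_left h]))

lemma Gamma_poch {a : ℝ} (ha : 0 < a) (n : ℕ) :
    Real.Gamma (a + n) = Real.Gamma a * poch a n := by
  induction n with
  | zero => simp [poch]
  | succ n ih =>
    have h : a + ((n:ℕ)+1:ℕ) = (a + n) + 1 := by push_cast; ring
    rw [h, Real.Gamma_add_one (by positivity), ih, poch_succ]; ring

theorem stmt19 (p m : ℕ) (hm : 1 ≤ m) (hpm : m < p) (f : ℝ)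
    (hf : ∀ n : ℕ, f ≠ -(n : ℝ)) :
    ∑' n : ℕ, (poch (1/2) n) ^ 2 * poch (f + m) n /
        (poch ((p : ℝ) + 1) n * poch f n * n.factorial) =
      (p.factorial : ℝ) * Real.Gamma p / Real.Gamma (p + 1/2) ^ 2 *
        ∑ k ∈ Finset.range (m + 1),
          (-1 : ℝ) ^ k * (m.choose k) * (poch (1/2) k) ^ 2 /
            (poch f k * poch (1 - (p : ℝ)) k) := by
  have hp1 : (0:ℝ) < (p:ℝ) + 1 := by positivity
  have hfne : ∀ k : ℕ, poch f k ≠ 0 := poch_ne_zero hf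
  -- the expanded basis functions
  set F : ℕ → ℕ → ℝ := fun k n =>
    poch (1/2) n ^ 2 * (n.descFactorial k : ℝ) / (poch ((p:ℝ)+1) n * n.factorial) with hF
  -- value of each basis sum
  set V : ℕ → ℝ := fun k => (poch (1/2) k ^ 2 / poch ((p:ℝ)+1) k) *
      (Real.Gamma ((p:ℝ) - k) * Real.Gamma ((p:ℝ)+(k:ℝ)+1) / Real.Gamma ((p:ℝ) + 1/2) ^ 2)
    with hV
  have hFsum : ∀ k ≤ m, HasSum (F k) (V k) := by
    intro k hk
    have hkp : k < p := lt_of_le_of_lt hk hpm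
    have hak : (0:ℝ) < 1/2 + k := by positivity
    have G := gauss hak (p - k) (by omega)
    have e1 : 2*(1/2 + (k:ℝ)) + ((p - k : ℕ):ℝ) = (p:ℝ) + k + 1 := by
      rw [Nat.cast_sub hkp.le]; ring
    have e2 : (1/2 + (k:ℝ)) + ((p-k:ℕ):ℝ) = (p:ℝ) + 1/2 := by
      rw [Nat.cast_sub hkp.le]; ring
    have e3 : (((p-k:ℕ)):ℝ) = (p:ℝ) - k := Nat.cast_sub hkp.le
    rw [e1, e2, e3] at G
    set Ck : ℝ := poch (1/2) k ^ 2 / poch ((p:ℝ)+1) k with hCk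
    have hshift : ∀ j : ℕ, F k (j + k) =
        Ck * tt (1/2 + k) ((p:ℝ)+k+1) j := by
      intro j
      have hcomm : j + k = k + j := Nat.add_comm j k
      have hd : (j.factorial : ℝ) * ((k+j).descFactorial k : ℝ) = ((k+j).factorial : ℝ) := by
        have h0 := Nat.factorial_mul_descFactorial (show k ≤ k + j by omega)
        rw [show k + j - k = j by omega] at h0
        exact_mod_cast congrArg (Nat.cast (R := ℝ)) h0
      have hp2 : poch ((p:ℝ)+1) (k+j) = poch ((p:ℝ)+1) k * poch ((p:ℝ)+k+1) j := by
        rw [poch_add]; ring_nf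
      have hh : poch (1/2) (k+j) = poch (1/2) k * poch (1/2+k) j := poch_add _ k j
      rw [hF, hcomm]
      simp only []
      rw [hp2, hh, tt, hCk]
      have n1 : poch ((p:ℝ)+1) k ≠ 0 := (poch_pos hp1 k).ne'
      have n2 : poch ((p:ℝ)+k+1) j ≠ 0 := (poch_pos (by positivity) j).ne'
      have n3 : (j.factorial : ℝ) ≠ 0 := by exact_mod_cast j.factorial_pos.ne'
      have n4 : ((k+j).factorial : ℝ) ≠ 0 := by exact_mod_cast (k+j).factorial_pos.ne'
      have hdesc' : (((k+j).descFactorial k : ℕ) : ℝ) = ((k+j).factorial : ℝ) / (j.factorial : ℝ) := by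
        rw [eq_div_iff n3]
        linarith [hd]
      rw [hdesc']
      field_simp
    have h2 : HasSum (fun j => F k (j + k)) (Ck * (Real.Gamma ((p:ℝ)-k) * Real.Gamma ((p:ℝ)+k+1) / Real.Gamma ((p:ℝ)+1/2)^2)) := by
      have := G.mul_left Ck
      exact (funext hshift ▸ this.congr fun _ => rfl : _)
    have h3 := (hasSum_nat_add_iff (f := F k) k).mp h2
    have hzero : ∑ i ∈ Finset.range k, F k i = 0 := by
      refine Finset.sum_eq_zero fun i hi => ?_
      have : i.descFactorial k = 0 :=
        Nat.descFactorial_eq_zero_iff_lt.2 (Finset.mem_range.1 hi)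
      rw [hF]; simp [this]
    rw [hzero, add_zero] at h3
    rw [hV]
    convert h3 using 2 <;> push_cast <;> ring
  -- pointwise expansion of the summand
  have hpt : ∀ n : ℕ, (poch (1/2) n) ^ 2 * poch (f + m) n /
        (poch ((p:ℝ) + 1) n * poch f n * n.factorial)
      = ∑ k ∈ Finset.range (m+1),
          ((m.choose k : ℝ) * poch (f+k) (m-k) / poch f m) * F k n := by
    intro n
    have hsym : poch (f+m) n * poch f m = poch (f+n) m * poch f n := by
      have h1 : poch f (m+n) = poch f m * poch (f+m) n := poch_add f m n
      have h2 : poch f (n+m) = poch f n * poch (f+n) m := poch_add f n m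
      rw [Nat.add_comm] at h1
      rw [h1] at h2
      linarith [h2]
    have hkey := keyid m f n
    have hrhs : ∑ k ∈ Finset.range (m+1),
          ((m.choose k : ℝ) * poch (f+k) (m-k) / poch f m) * F k n
        = poch (f+n) m * (poch (1/2) n ^2 / (poch ((p:ℝ)+1) n * (n.factorial:ℝ) * poch f m)) := by
      rw [← hkey, Finset.sum_mul]
      refine Finset.sum_congr rfl fun k _ => ?_
      rw [hF]
      simp only []
      ring
    rw [hrhs]
    have n1 : poch ((p:ℝ)+1) n ≠ 0 := (poch_pos hp1 n).ne'
    have n3 : (n.factorial : ℝ) ≠ 0 := by exact_mod_cast n.factorial_pos.ne'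
    have n5 : poch f n ≠ 0 := hfne n
    have n6 : poch f m ≠ 0 := hfne m
    field_simp
    linear_combination (poch (1/2) n ^2) * hsym
  -- total HasSum
  have htot : HasSum (fun n => (poch (1/2) n) ^ 2 * poch (f + m) n /
        (poch ((p:ℝ) + 1) n * poch f n * n.factorial))
      (∑ k ∈ Finset.range (m+1),
        ((m.choose k : ℝ) * poch (f+k) (m-k) / poch f m) * V k) := by
    have := hasSum_sum (s := Finset.range (m+1))
      (f := fun k n => ((m.choose k : ℝ) * poch (f+k) (m-k) / poch f m) * F k n)
      (a := fun k => ((m.choose k : ℝ) * poch (f+k) (m-k) / poch f m) * V k)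
      (fun k hk => (hFsum k (Nat.lt_succ_iff.mp (Finset.mem_range.1 hk))).mul_left _)
    have hfeq : (fun n => (poch (1/2) n) ^ 2 * poch (f + m) n /
        (poch ((p:ℝ) + 1) n * poch f n * n.factorial))
        = fun n => ∑ k ∈ Finset.range (m+1),
          ((m.choose k : ℝ) * poch (f+k) (m-k) / poch f m) * F k n := funext hpt
    rw [hfeq]
    simpa using this
  rw [htot.tsum_eq, Finset.mul_sum]
  refine Finset.sum_congr rfl fun k hk => ?_
  have hkm : k ≤ m := Nat.lt_succ_iff.mp (Finset.mem_range.1 hk)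
  have hkp : k < p := lt_of_le_of_lt hkm hpm
  -- per-term identification
  have hA4 : poch f m = poch f k * poch (f+k) (m-k) := by
    have := poch_add f k (m-k)
    rw [show k + (m-k) = m by omega] at this
    exact this
  have n5 : poch f k ≠ 0 := hfne k
  have n6 : poch (f+k) (m-k) ≠ 0 := by
    intro h
    exact hfne m (by rw [hA4, h, mul_zero])
  have n7 : poch (1 - (p:ℝ)) k ≠ 0 := by
    rw [poch]
    refine Finset.prod_ne_zero_iff.2 fun i hi => ?_
    have hi2 : i + 2 ≤ p := by
      have := Finset.mem_range.1 hi
      omega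
    have : (i:ℝ) + 2 ≤ (p:ℝ) := by exact_mod_cast hi2
    intro h0
    linarith
  have n8 : poch ((p:ℝ)+1) k ≠ 0 := (poch_pos hp1 k).ne'
  have n9 : Real.Gamma ((p:ℝ) + 1/2) ≠ 0 := (Real.Gamma_pos_of_pos (by positivity)).ne'
  have hA3 := neg_poch p k hkp
  have hGpk : Real.Gamma ((p:ℝ) - k) = (-1:ℝ)^k * Real.Gamma p / poch (1 - (p:ℝ)) k := by
    rw [eq_div_iff n7]
    linear_combination hA3
  have hA1 : Real.Gamma ((p:ℝ)+(k:ℝ)+1) = (p.factorial : ℝ) * poch ((p:ℝ)+1) k := by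
    have e : (p:ℝ)+(k:ℝ)+1 = ((p:ℝ)+1)+(k:ℝ) := by ring
    rw [e, Gamma_poch hp1 k, Real.Gamma_nat_eq_factorial]
  rw [hV]
  simp only []
  rw [hGpk, hA1, hA4]
  field_simp
end
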